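/- Let C, C̄ ∈ ℝ^{m×n} be channels with the same input distribution Π = diag(π_1,...,π_n), π_i > 0. Then C̄ is a convexified Shannon-garbling of C if and only if C is more convexified-Shannon-useful than C̄, i.e., for every utility matrix U ∈ ℝ^{n×m}: max over D ∈ Φ_cS(C) of tr(U·D·Π) ≥ max over D ∈ Φ_cS(C̄) of tr(U·D·Π). -/

import Mathlib

open Matrix BigOperators

def ColStoch {m n : ℕ} (A : Matrix (Fin m) (Fin n) ℝ) : Prop :=
  (∀ i j, 0 ≤ A i j) ∧ ∀ j, ∑ i, A i j = 1

def PhiCS {m n : ℕ} (C : Matrix (Fin m) (Fin n) ℝ) : Set (Matrix (Fin m) (Fin n) ℝ) :=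
  {D | ∃ (k : ℕ) (p : Fin k → ℝ) (A : Fin k → Matrix (Fin m) (Fin m) ℝ)
        (B : Fin k → Matrix (Fin n) (Fin n) ℝ),
      (∀ i, 0 ≤ p i) ∧ (∑ i, p i = 1) ∧ (∀ i, ColStoch (A i)) ∧ (∀ i, ColStoch (B i)) ∧
      D = ∑ i, p i • (A i * C * B i)}

section Aux

variable {a b c m n : ℕ}

lemma colStoch_one : ColStoch (1 : Matrix (Fin m) (Fin m) ℝ) := by
  constructor
  · intro i j
    by_cases h : i = j <;> simp [Matrix.one_apply, h]
  · intro j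
    simp [Matrix.one_apply]

lemma colStoch_mul {A : Matrix (Fin a) (Fin b) ℝ} {B : Matrix (Fin b) (Fin c) ℝ}
    (hA : ColStoch A) (hB : ColStoch B) : ColStoch (A * B) := by
  constructor
  · intro i j
    rw [Matrix.mul_apply]
    exact Finset.sum_nonneg fun k _ => mul_nonneg (hA.1 i k) (hB.1 k j)
  · intro j
    calc ∑ i, (A * B) i j = ∑ i, ∑ k, A i k * B k j := by simp [Matrix.mul_apply]
      _ = ∑ k, (∑ i, A i k) * B k j := by rw [Finset.sum_comm]; simp [Finset.sum_mul]
      _ = 1 := by simp [hA.2, hB.2 j]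

lemma mem_phiCS_of {C : Matrix (Fin m) (Fin n) ℝ} {ι : Type} [Fintype ι]
    (p : ι → ℝ) (A : ι → Matrix (Fin m) (Fin m) ℝ) (B : ι → Matrix (Fin n) (Fin n) ℝ)
    (hp : ∀ i, 0 ≤ p i) (hp1 : ∑ i, p i = 1) (hA : ∀ i, ColStoch (A i))
    (hB : ∀ i, ColStoch (B i)) : (∑ i, p i • (A i * C * B i)) ∈ PhiCS C := by
  classical
  let e := (Fintype.equivFin ι).symm
  refine ⟨Fintype.card ι, p ∘ e, A ∘ e, B ∘ e, fun i => hp _, ?_, fun i => hA _,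
    fun i => hB _, ?_⟩
  · rw [show (p ∘ e) = fun i => p (e i) from rfl, Equiv.sum_comp e p]; exact hp1
  · exact (Equiv.sum_comp e fun i => p i • (A i * C * B i)).symm

lemma phiCS_self (C : Matrix (Fin m) (Fin n) ℝ) : C ∈ PhiCS C :=
  ⟨1, fun _ => 1, fun _ => 1, fun _ => 1, fun _ => zero_le_one, by simp,
    fun _ => colStoch_one, fun _ => colStoch_one, by simp⟩

lemma phiCS_subset {C Cbar : Matrix (Fin m) (Fin n) ℝ} (h : Cbar ∈ PhiCS C) :
    PhiCS Cbar ⊆ PhiCS C := by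
  obtain ⟨l, q, M, N, hq0, hq1, hM, hN, hCbar⟩ := h
  rintro D ⟨k, p, A, B, hp0, hp1, hA, hB, rfl⟩
  have key : (∑ i, p i • (A i * Cbar * B i)) =
      ∑ ij : Fin k × Fin l, (p ij.1 * q ij.2) • ((A ij.1 * M ij.2) * C * (N ij.2 * B ij.1)) := by
    rw [Fintype.sum_prod_type]
    refine Finset.sum_congr rfl fun i _ => ?_
    rw [hCbar, Matrix.mul_sum, Matrix.sum_mul, Finset.smul_sum]
    refine Finset.sum_congr rfl fun j _ => ?_
    simp only [Matrix.mul_smul, Matrix.smul_mul, smul_smul, Matrix.mul_assoc]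
  rw [key]
  exact mem_phiCS_of _ _ _ (fun ij => mul_nonneg (hp0 _) (hq0 _))
    (by rw [Fintype.sum_prod_type]; simp only [← Finset.mul_sum, hq1, mul_one, hp1])
    (fun ij => colStoch_mul (hA _) (hM _)) (fun ij => colStoch_mul (hN _) (hB _))

lemma phiCS_convex (C : Matrix (Fin m) (Fin n) ℝ) : Convex ℝ (PhiCS C) := by
  rintro x ⟨k, p, A, B, hp0, hp1, hA, hB, rfl⟩ y ⟨l, q, M, N, hq0, hq1, hM, hN, rfl⟩ s t hs ht hst
  have key : (s • ∑ i, p i • (A i * C * B i) + t • ∑ i, q i • (M i * C * N i)) =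
      ∑ i : Fin k ⊕ Fin l, (Sum.elim (fun i => s * p i) fun j => t * q j) i •
        (Sum.elim A M i * C * Sum.elim B N i) := by
    rw [Fintype.sum_sum_type]
    simp [Finset.smul_sum, smul_smul]
  rw [key]
  refine mem_phiCS_of _ _ _ (fun i => ?_) ?_ (fun i => ?_) (fun i => ?_)
  · cases i with
    | inl i => exact mul_nonneg hs (hp0 i)
    | inr j => exact mul_nonneg ht (hq0 j)
  · rw [Fintype.sum_sum_type]
    simp only [Sum.elim_inl, Sum.elim_inr, ← Finset.mul_sum, hp1, hq1, mul_one]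
    exact hst
  · cases i with
    | inl i => exact hA i
    | inr j => exact hM j
  · cases i with
    | inl i => exact hB i
    | inr j => exact hN j

lemma isCompact_colStoch : IsCompact {A : Matrix (Fin a) (Fin b) ℝ | ColStoch A} := by
  have hsub : {A : Matrix (Fin a) (Fin b) ℝ | ColStoch A} ⊆
      Set.univ.pi fun _ : Fin a => Set.univ.pi fun _ : Fin b => Set.Icc (0 : ℝ) 1 := by
    intro A hA i _ j _
    refine ⟨hA.1 i j, ?_⟩
    calc A i j ≤ ∑ i', A i' j :=
          Finset.single_le_sum (fun i' _ => hA.1 i' j) (Finset.mem_univ i)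
      _ = 1 := hA.2 j
  have hcomp : IsCompact (Set.univ.pi fun _ : Fin a =>
      Set.univ.pi fun _ : Fin b => Set.Icc (0 : ℝ) 1) :=
    isCompact_univ_pi fun _ => isCompact_univ_pi fun _ => isCompact_Icc
  refine hcomp.of_isClosed_subset ?_ hsub
  have hrw : {A : Matrix (Fin a) (Fin b) ℝ | ColStoch A} =
      (⋂ i, ⋂ j, {A : Matrix (Fin a) (Fin b) ℝ | 0 ≤ A i j}) ∩
        ⋂ j, {A : Matrix (Fin a) (Fin b) ℝ | ∑ i, A i j = 1} := by
    ext A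
    simp [ColStoch, Set.mem_iInter]
  rw [hrw]
  have hev : ∀ (i : Fin a) (j : Fin b),
      Continuous fun A : Matrix (Fin a) (Fin b) ℝ => A i j := fun i j =>
    (continuous_apply j).comp (continuous_apply i)
  refine IsClosed.inter ?_ ?_
  · exact isClosed_iInter fun i => isClosed_iInter fun j =>
      isClosed_Ici.preimage (hev i j)
  · exact isClosed_iInter fun j =>
      (isClosed_singleton (x := (1 : ℝ))).preimage
        (continuous_finset_sum _ fun i _ => hev i j)

lemma sum_dite_fin {M : Type*} [AddCommMonoid M] {ι : Type*} [Fintype ι] (K : ℕ)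
    (hc : Fintype.card ι ≤ K) (σ : Fin (Fintype.card ι) ≃ ι) (f : ι → M) :
    (∑ j : Fin K, if h : (j : ℕ) < Fintype.card ι then f (σ ⟨j, h⟩) else 0) = ∑ i, f i := by
  classical
  set g : ℕ → M := fun t => if h : t < Fintype.card ι then f (σ ⟨t, h⟩) else 0 with hg
  calc (∑ j : Fin K, if h : (j : ℕ) < Fintype.card ι then f (σ ⟨j, h⟩) else 0)
      = ∑ t ∈ Finset.range K, g t := Fin.sum_univ_eq_sum_range g K
    _ = ∑ t ∈ Finset.range (Fintype.card ι), g t :=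
      (Finset.sum_subset (Finset.range_subset_range.2 hc)
        (fun t _ ht => by
          simp only [Finset.mem_range] at ht
          simp [hg, ht])).symm
    _ = ∑ j : Fin (Fintype.card ι), g j :=
      (Fin.sum_univ_eq_sum_range g (Fintype.card ι)).symm
    _ = ∑ j : Fin (Fintype.card ι), f (σ j) := by
        refine Finset.sum_congr rfl fun j _ => ?_
        simp [hg, j.isLt]
    _ = ∑ i, f i := Equiv.sum_comp σ f

lemma phiCS_subset_hull (C : Matrix (Fin m) (Fin n) ℝ) :
    PhiCS C ⊆ convexHull ℝ
      {X : Matrix (Fin m) (Fin n) ℝ | ∃ (A : Matrix (Fin m) (Fin m) ℝ) (B : Matrix (Fin n) (Fin n) ℝ), ColStoch A ∧ ColStoch B ∧ X = A * C * B} := by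
  rintro D ⟨k, p, A, B, hp0, hp1, hA, hB, rfl⟩
  exact Convex.sum_mem (convex_convexHull ℝ _) (fun i _ => hp0 i) hp1
    (fun i _ => subset_convexHull ℝ _ ⟨A i, B i, hA i, hB i, rfl⟩)

lemma phiCS_isClosed (C : Matrix (Fin m) (Fin n) ℝ) : IsClosed (PhiCS C) := by
  classical
  set K := Module.finrank ℝ (Matrix (Fin m) (Fin n) ℝ) + 1 with hK
  set T : Set ((Fin K → ℝ) × (Fin K → Matrix (Fin m) (Fin m) ℝ) ×
      (Fin K → Matrix (Fin n) (Fin n) ℝ)) :=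
    (stdSimplex ℝ (Fin K)) ×ˢ
      ((Set.univ.pi fun _ => {A | ColStoch A}) ×ˢ (Set.univ.pi fun _ => {B | ColStoch B}))
    with hT
  have hTcomp : IsCompact T := (isCompact_stdSimplex _ _).prod
    ((isCompact_univ_pi fun _ => isCompact_colStoch).prod
      (isCompact_univ_pi fun _ => isCompact_colStoch))
  set G : (Fin K → ℝ) × (Fin K → Matrix (Fin m) (Fin m) ℝ) ×
      (Fin K → Matrix (Fin n) (Fin n) ℝ) → Matrix (Fin m) (Fin n) ℝ :=
    fun x => ∑ i, x.1 i • (x.2.1 i * C * x.2.2 i) with hGdef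
  have hG : Continuous G := by
    apply continuous_finset_sum
    intro i _
    exact ((continuous_apply i).comp continuous_fst).smul
      ((((continuous_apply i).comp (continuous_fst.comp continuous_snd)).matrix_mul
        continuous_const).matrix_mul
        ((continuous_apply i).comp (continuous_snd.comp continuous_snd)))
  have himg : PhiCS C = G '' T := by
    apply Set.Subset.antisymm
    · intro D hD
      have hD' := phiCS_subset_hull C hD
      obtain ⟨ι, hι, z, w, hz, hai, hw0, hw1, hwz⟩ :=
        eq_pos_convex_span_of_mem_convexHull hD'
      letI := hι
      have hw1' : ∑ i, w i = 1 := hw1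
      have hwz' : ∑ i, w i • z i = D := hwz
      have hcard : Fintype.card ι ≤ K := by
        refine le_trans hai.card_le_finrank_succ ?_
        have h1 := Submodule.finrank_le (vectorSpan ℝ (Set.range z))
        omega
      set σ : Fin (Fintype.card ι) ≃ ι := (Fintype.equivFin ι).symm with hσ
      have hzS : ∀ i : ι, ∃ (A : Matrix (Fin m) (Fin m) ℝ) (B : Matrix (Fin n) (Fin n) ℝ), ColStoch A ∧ ColStoch B ∧ z i = A * C * B :=
        fun i => hz (Set.mem_range_self i)
      choose MA MB hMA hMB hzeq using hzS
      set p : Fin K → ℝ :=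
        fun j => if h : (j : ℕ) < Fintype.card ι then w (σ ⟨j, h⟩) else 0 with hp
      set Af : Fin K → Matrix (Fin m) (Fin m) ℝ :=
        fun j => if h : (j : ℕ) < Fintype.card ι then MA (σ ⟨j, h⟩) else 1 with hAf
      set Bf : Fin K → Matrix (Fin n) (Fin n) ℝ :=
        fun j => if h : (j : ℕ) < Fintype.card ι then MB (σ ⟨j, h⟩) else 1 with hBf
      refine ⟨⟨p, Af, Bf⟩, ⟨⟨fun j => ?_, ?_⟩, fun j _ => ?_, fun j _ => ?_⟩, ?_⟩
      · by_cases h : (j : ℕ) < Fintype.card ι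
        · simp only [hp, dif_pos h]; exact (hw0 _).le
        · simp [hp, h]
      · show ∑ j, p j = 1
        rw [show ∑ j, p j =
            ∑ j : Fin K, if h : (j : ℕ) < Fintype.card ι then w (σ ⟨j, h⟩) else 0 from rfl,
          sum_dite_fin K hcard σ w, hw1']
      · show ColStoch (Af j)
        by_cases h : (j : ℕ) < Fintype.card ι
        · simp only [hAf, dif_pos h]; exact hMA _
        · simp only [hAf, dif_neg h]; exact colStoch_one
      · show ColStoch (Bf j)
        by_cases h : (j : ℕ) < Fintype.card ι
        · simp only [hBf, dif_pos h]; exact hMB _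
        · simp only [hBf, dif_neg h]; exact colStoch_one
      · show ∑ j, p j • (Af j * C * Bf j) = D
        set F : ι → Matrix (Fin m) (Fin n) ℝ := fun i => w i • (MA i * C * MB i) with hF
        have step : ∀ j : Fin K, p j • (Af j * C * Bf j) =
            if h : (j : ℕ) < Fintype.card ι then F (σ ⟨j, h⟩) else 0 := by
          intro j
          by_cases h : (j : ℕ) < Fintype.card ι
          · simp only [hp, hAf, hBf, hF, dif_pos h]
          · simp [hp, hAf, hBf, dif_neg h]
        calc ∑ j, p j • (Af j * C * Bf j)
            = ∑ j : Fin K, if h : (j : ℕ) < Fintype.card ι then F (σ ⟨j, h⟩) else 0 :=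
              Finset.sum_congr rfl fun j _ => step j
          _ = ∑ i, F i := sum_dite_fin K hcard σ F
          _ = ∑ i, w i • z i := by
              refine Finset.sum_congr rfl fun i _ => ?_
              rw [hF, hzeq i]
          _ = D := hwz'
    · rintro _ ⟨⟨p, A, B⟩, ⟨hp, hA, hB⟩, rfl⟩
      exact ⟨K, p, A, B, hp.1, hp.2, fun i => hA i (Set.mem_univ i),
        fun i => hB i (Set.mem_univ i), rfl⟩
  rw [himg]
  exact (hTcomp.image hG).isClosed

lemma trace_functional (π : Fin n → ℝ) (hπ : ∀ i, 0 < π i)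
    (f : Matrix (Fin m) (Fin n) ℝ →ₗ[ℝ] ℝ) (D : Matrix (Fin m) (Fin n) ℝ) :
    ((Matrix.of fun j i => f (Matrix.single i j 1) / π j) * D * Matrix.diagonal π).trace
      = f D := by
  have hD : D = ∑ i, ∑ j, D i j • Matrix.single i j (1 : ℝ) := by
    conv_lhs => rw [matrix_eq_sum_single D]
    refine Finset.sum_congr rfl fun i _ => Finset.sum_congr rfl fun j _ => ?_
    rw [Matrix.smul_single, smul_eq_mul, mul_one]
  have hfD : f D = ∑ i, ∑ j, D i j * f (Matrix.single i j 1) := by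
    conv_lhs => rw [hD]
    rw [map_sum]
    refine Finset.sum_congr rfl fun i _ => ?_
    rw [map_sum]
    refine Finset.sum_congr rfl fun j _ => ?_
    rw [_root_.map_smul, smul_eq_mul]
  have htr : ((Matrix.of fun j i => f (Matrix.single i j 1) / π j) * D *
      Matrix.diagonal π).trace
      = ∑ j, ∑ i, f (Matrix.single i j 1) / π j * D i j * π j := by
    simp only [Matrix.trace, Matrix.diag, Matrix.mul_diagonal]
    refine Finset.sum_congr rfl fun j _ => ?_
    rw [Matrix.mul_apply, Finset.sum_mul]
    simp only [Matrix.of_apply]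
  rw [htr, hfD, Finset.sum_comm]
  refine Finset.sum_congr rfl fun i _ => Finset.sum_congr rfl fun j _ => ?_
  field_simp [(hπ j).ne']

noncomputable instance matrixLocallyConvex :
    LocallyConvexSpace ℝ (Matrix (Fin m) (Fin n) ℝ) :=
  inferInstanceAs (LocallyConvexSpace ℝ (Fin m → Fin n → ℝ))

end Aux

/-- Convexified Shannon's theorem: the convexified Shannon-order is equivalent to
convexified Shannon-usefulness. -/
theorem convexified_shannon_theorem {m n : ℕ}
    (C Cbar : Matrix (Fin m) (Fin n) ℝ) (hC : ColStoch C) (hCbar : ColStoch Cbar)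
    (π : Fin n → ℝ) (hπ : ∀ i, 0 < π i) :
    Cbar ∈ PhiCS C ↔
      ∀ U : Matrix (Fin n) (Fin m) ℝ,
        ∀ Dbar ∈ PhiCS Cbar, ∃ D ∈ PhiCS C,
          (U * D * Matrix.diagonal π).trace ≥ (U * Dbar * Matrix.diagonal π).trace := by
  constructor
  · intro h U Dbar hDbar
    exact ⟨Dbar, phiCS_subset h hDbar, le_refl _⟩
  · intro h
    by_contra hnot
    obtain ⟨f, u, hfs, hfx⟩ :=
      geometric_hahn_banach_closed_point (phiCS_convex C) (phiCS_isClosed C) hnot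
    obtain ⟨D, hD, hge⟩ :=
      h (Matrix.of fun j i => f.toLinearMap (Matrix.single i j 1) / π j) Cbar (phiCS_self Cbar)
    rw [trace_functional π hπ f.toLinearMap D, trace_functional π hπ f.toLinearMap Cbar] at hge
    have h1 : f D < u := hfs D hD
    have h2 : f.toLinearMap D = f D := rfl
    have h3 : f.toLinearMap Cbar = f Cbar := rfl
    rw [h2, h3] at hge
    linarith
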